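/- Let G be a PCR over a finite PCS Σ and define the coherent projection coh_G(T) := ↑T ∖ (↑T)* for T ⊆ Σ. Then: (a) coh_G(T) is G-coherent and forward-closed; (b) coh_G(coh_G(T)) = coh_G(T); (c) if T is G-coherent then T ⊆ coh_G(T); (d) coh_G(T) = T if and only if T is G-coherent and forward-closed. Hence coh_G is an idempotent self-map of the power set of Σ whose image is exactly the set of forward-closed coherent subsets. -/
import Mathlib


universe u v

structure PCS (α : Type*) where
  star : α → α
  zero : α
  star_star : ∀ a, star (star a) = a
  star_ne_self : ∀ a, star a ≠ a

variable {α : Type*}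

/-- A pointed complemented relation (PCR) over the PCS `P`. -/
def IsPCR (P : PCS α) (G : Set (α × α)) : Prop :=
  (∀ a, (P.zero, a) ∈ G) ∧ ∀ a b, (a, b) ∈ G ↔ (P.star b, P.star a) ∈ G

/-- `a ≤_G b`: the reflexive-transitive closure of the relation `G`. -/
def pcrLe (G : Set (α × α)) (a b : α) : Prop :=
  Relation.ReflTransGen (fun x y => (x, y) ∈ G) a b

/-- A set `S` is `G`-coherent if no `a, b ∈ S` satisfy `a ≤_G b*`. -/
def Coherent (P : PCS α) (G : Set (α × α)) (S : Set α) : Prop :=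
  ∀ a ∈ S, ∀ b ∈ S, ¬ pcrLe G a (P.star b)

/-- Forward closure `↑S = {b | ∃ a ∈ S, a ≤_G b}`. -/
def upClosure (G : Set (α × α)) (S : Set α) : Set α :=
  {b | ∃ a ∈ S, pcrLe G a b}

/-- Maximal `G`-coherent subsets; the members of the dual space `G°`. -/
def MaxCoherent (P : PCS α) (G : Set (α × α)) (S : Set α) : Prop :=
  Coherent P G S ∧ ∀ T, Coherent P G T → S ⊆ T → S = T

/-- `G` is non-degenerate: no `a` satisfies both `a ≤_G a*` and `a* ≤_G a`. -/
def Nondegenerate (P : PCS α) (G : Set (α × α)) : Prop :=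
  ∀ a, ¬ (pcrLe G a (P.star a) ∧ pcrLe G (P.star a) a)

/-- A complete `*`-selection: exactly one of `a`, `a*` belongs to `S`, for each `a`. -/
def CompleteSel (P : PCS α) (S : Set α) : Prop :=
  ∀ a, Xor' (a ∈ S) (P.star a ∈ S)

/-- The half-space `⟨S;G⟩ = {u ∈ G° : S ⊆ u}`. -/
def halfspace (P : PCS α) (G : Set (α × α)) (S : Set α) : Set (Set α) :=
  {u | MaxCoherent P G u ∧ S ⊆ u}

/-- Coherent projection `coh_G(T) = ↑T ∖ (↑T)*`. -/
def cohProj (P : PCS α) (G : Set (α × α)) (T : Set α) : Set α :=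
  upClosure G T \ (P.star '' upClosure G T)

/-- Morphisms of PCRs. -/
def IsPCRHom {β : Type*} (P : PCS α) (Q : PCS β) (G : Set (α × α)) (H : Set (β × β))
    (f : α → β) : Prop :=
  f P.zero = Q.zero ∧ (∀ a, f (P.star a) = Q.star (f a)) ∧
    ∀ a b, (a, b) ∈ G → pcrLe H (f a) (f b)

/-- A poc set: a PCR whose induced relation `≤_G` is antisymmetric and whose only
negligible element is `0`. -/
def IsPocSet (P : PCS α) (G : Set (α × α)) : Prop :=
  IsPCR P G ∧ (∀ a b, pcrLe G a b → pcrLe G b a → a = b) ∧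
    ∀ a, pcrLe G a (P.star a) → a = P.zero

lemma pcrLe_star {P : PCS α} {G : Set (α × α)} (hG : IsPCR P G) {a b : α}
    (h : pcrLe G a b) : pcrLe G (P.star b) (P.star a) := by
  induction h with
  | refl => exact Relation.ReflTransGen.refl
  | tail hab hbc ih => exact Relation.ReflTransGen.head ((hG.2 _ _).mp hbc) ih

lemma mem_upClosure_trans {G : Set (α × α)} {T : Set α} {a b : α}
    (ha : a ∈ upClosure G T) (h : pcrLe G a b) : b ∈ upClosure G T := by
  obtain ⟨c, hc, hca⟩ := ha
  exact ⟨c, hc, hca.trans h⟩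

lemma coh_coherent {P : PCS α} {G : Set (α × α)} (hG : IsPCR P G) (T : Set α) :
    Coherent P G (cohProj P G T) := by
  rintro a ⟨ha, _⟩ b ⟨hb, hb'⟩ hle
  exact hb' ⟨P.star b, mem_upClosure_trans ha hle, P.star_star b⟩

lemma coh_up {P : PCS α} {G : Set (α × α)} (hG : IsPCR P G) (T : Set α) :
    upClosure G (cohProj P G T) = cohProj P G T := by
  ext b
  constructor
  · rintro ⟨a, ⟨ha, ha'⟩, hab⟩
    refine ⟨mem_upClosure_trans ha hab, ?_⟩
    rintro ⟨c, hc, rfl⟩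
    have : pcrLe G c (P.star a) := by
      have := pcrLe_star hG hab
      rwa [P.star_star] at this
    exact ha' ⟨P.star a, mem_upClosure_trans hc this, P.star_star a⟩
  · exact fun hb => ⟨b, hb, Relation.ReflTransGen.refl⟩

lemma coh_sub {P : PCS α} {G : Set (α × α)} (hG : IsPCR P G) {T : Set α}
    (hT : Coherent P G T) : T ⊆ cohProj P G T := by
  intro a ha
  refine ⟨⟨a, ha, Relation.ReflTransGen.refl⟩, ?_⟩
  rintro ⟨b, ⟨c, hc, hcb⟩, rfl⟩
  exact hT c hc (P.star b) ha (by rw [P.star_star]; exact hcb)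

lemma coh_eq_iff {P : PCS α} {G : Set (α × α)} (hG : IsPCR P G) (T : Set α) :
    cohProj P G T = T ↔ Coherent P G T ∧ upClosure G T = T := by
  constructor
  · intro h
    refine ⟨h ▸ coh_coherent hG T, ?_⟩
    have := coh_up hG T
    rwa [h] at this
  · rintro ⟨hc, hu⟩
    exact Set.Subset.antisymm (fun a ha => hu ▸ ha.1) (coh_sub hG hc)

/-- Coherent projection is an idempotent whose image is exactly the forward-closed
coherent subsets. -/
theorem stmt8 [Finite α] (P : PCS α) (G : Set (α × α)) (hG : IsPCR P G) :
    (∀ T : Set α, Coherent P G (cohProj P G T) ∧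
        upClosure G (cohProj P G T) = cohProj P G T) ∧
    (∀ T : Set α, cohProj P G (cohProj P G T) = cohProj P G T) ∧
    (∀ T : Set α, Coherent P G T → T ⊆ cohProj P G T) ∧
    (∀ T : Set α, cohProj P G T = T ↔ Coherent P G T ∧ upClosure G T = T) ∧
    Set.range (cohProj P G) = {S | Coherent P G S ∧ upClosure G S = S} := by
  refine ⟨fun T => ⟨coh_coherent hG T, coh_up hG T⟩,
    fun T => (coh_eq_iff hG _).mpr ⟨coh_coherent hG T, coh_up hG T⟩,
    fun T hT => coh_sub hG hT, coh_eq_iff hG, ?_⟩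
  ext S
  constructor
  · rintro ⟨T, rfl⟩
    exact ⟨coh_coherent hG T, coh_up hG T⟩
  · rintro ⟨hc, hu⟩
    exact ⟨S, (coh_eq_iff hG S).mpr ⟨hc, hu⟩⟩
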